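/- arXiv:2009.07069 — 4 statements merged into one kernel-verified Lean document; each statement's English description precedes it below -/
import Mathlib

section
/- Let 0 < α < π/2, κ = sin α, and K = ∫₀^{π/2} F(1/6, 5/6; 1/2; κ² sin² φ) dφ. Then K = √2 · ∫₀^{α} cos(2ψ/3) / √(cos 2ψ − cos 2α) dψ. -/
open MeasureTheory Real

/-- The Gaussian hypergeometric function `₂F₁(a, b; c; x)` as a power series
with Pochhammer (rising factorial) coefficients. -/
noncomputable def hyp (a b c x : ℝ) : ℝ :=
  ∑' n : ℕ, ((ascPochhammer ℝ n).eval a * (ascPochhammer ℝ n).eval b) /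
    ((ascPochhammer ℝ n).eval c * (n.factorial : ℝ)) * x ^ n

namespace KProof

noncomputable def c (n : ℕ) : ℝ :=
  ((ascPochhammer ℝ n).eval (1/6) * (ascPochhammer ℝ n).eval (5/6)) /
    ((ascPochhammer ℝ n).eval (1/2) * (n.factorial : ℝ))

lemma c_zero : c 0 = 1 := by simp [c]

lemma c_pos (n : ℕ) : 0 < c n := by
  apply div_pos
  · exact mul_pos (ascPochhammer_pos n _ (by norm_num)) (ascPochhammer_pos n _ (by norm_num))
  · exact mul_pos (ascPochhammer_pos n _ (by norm_num))
      (by exact_mod_cast Nat.cast_pos.mpr n.factorial_pos)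

lemma c_rec (n : ℕ) :
    ((n:ℝ)+1/2)*((n:ℝ)+1) * c (n+1) = ((n:ℝ)+1/6)*((n:ℝ)+5/6) * c n := by
  have hP : (0:ℝ) < (ascPochhammer ℝ n).eval (1/2) :=
    ascPochhammer_pos n _ (by norm_num)
  have hF : (0:ℝ) < (n.factorial : ℝ) := by exact_mod_cast Nat.cast_pos.mpr n.factorial_pos
  unfold c
  rw [ascPochhammer_succ_eval, ascPochhammer_succ_eval, ascPochhammer_succ_eval,
    Nat.factorial_succ]
  push_cast
  field_simp
  ring

lemma c_le_one (n : ℕ) : c n ≤ 1 := by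
  induction n with
  | zero => rw [c_zero]
  | succ n ih =>
    have h := c_rec n
    have h1 : (0:ℝ) < ((n:ℝ)+1/2)*((n:ℝ)+1) := by positivity
    have hc : c (n+1) = ((n:ℝ)+1/6)*((n:ℝ)+5/6) * c n / (((n:ℝ)+1/2)*((n:ℝ)+1)) := by
      field_simp
      linarith [h]
    rw [hc, div_le_one h1]
    have hp := c_pos n
    nlinarith

noncomputable def f (x : ℝ) : ℝ := ∑' n : ℕ, c n * x ^ n
noncomputable def f1 (x : ℝ) : ℝ := ∑' n : ℕ, ((n:ℝ)+1) * c (n+1) * x ^ n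
noncomputable def f2 (x : ℝ) : ℝ := ∑' n : ℕ, ((n:ℝ)+2) * ((n:ℝ)+1) * c (n+2) * x ^ n

lemma abs_c_term_le {x : ℝ} (n : ℕ) (hb : 0 < c n) (hc1 : c n ≤ 1) :
    ‖c n * x ^ n‖ ≤ |x| ^ n := by
  rw [norm_mul, norm_pow, Real.norm_eq_abs, Real.norm_eq_abs, abs_of_pos hb]
  exact mul_le_of_le_one_left (by positivity) hc1

lemma summable_aux {r : ℝ} (hr0 : 0 ≤ r) (hr : r < 1) (a b d : ℝ) :
    Summable (fun n : ℕ => (a * (n:ℝ)^2 + b * (n:ℝ) + d) * r ^ n) := by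
  have hr' : ‖r‖ < 1 := by rwa [Real.norm_eq_abs, abs_of_nonneg hr0]
  have h2 := summable_pow_mul_geometric_of_norm_lt_one (R := ℝ) 2 hr'
  have h1 := summable_pow_mul_geometric_of_norm_lt_one (R := ℝ) 1 hr'
  have h0 := summable_geometric_of_lt_one hr0 hr
  have := ((h2.mul_left a).add (h1.mul_left b)).add (h0.mul_left d)
  refine this.congr fun n => ?_
  simp only [pow_one]
  ring

lemma sum0 {x : ℝ} (hx : |x| < 1) : Summable (fun n : ℕ => c n * x ^ n) := by
  refine Summable.of_norm_bounded (summable_geometric_of_lt_one (abs_nonneg x) hx) ?_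
  intro n
  exact abs_c_term_le n (c_pos n) (c_le_one n)

lemma sum1 {x : ℝ} (hx : |x| < 1) : Summable (fun n : ℕ => ((n:ℝ)+1) * c (n+1) * x ^ n) := by
  refine Summable.of_norm_bounded (summable_aux (abs_nonneg x) hx 0 1 1) ?_
  intro n
  have h1 : (0:ℝ) ≤ (n:ℝ)+1 := by positivity
  rw [norm_mul, norm_mul, Real.norm_eq_abs, Real.norm_eq_abs, Real.norm_eq_abs,
    abs_of_nonneg h1, abs_of_pos (c_pos (n+1)), abs_pow]
  have : ((n:ℝ)+1) * c (n+1) ≤ ((n:ℝ)+1) * 1 := by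
    exact mul_le_mul_of_nonneg_left (c_le_one (n+1)) h1
  calc ((n:ℝ)+1) * c (n+1) * |x| ^ n ≤ (((n:ℝ)+1) * 1) * |x| ^ n := by
        exact mul_le_mul_of_nonneg_right this (by positivity)
    _ = (0 * (n:ℝ)^2 + 1 * (n:ℝ) + 1) * |x| ^ n := by ring
    _ ≤ _ := le_refl _

lemma sum2 {x : ℝ} (hx : |x| < 1) :
    Summable (fun n : ℕ => ((n:ℝ)+2) * ((n:ℝ)+1) * c (n+2) * x ^ n) := by
  refine Summable.of_norm_bounded (summable_aux (abs_nonneg x) hx 1 3 2) ?_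
  intro n
  have h1 : (0:ℝ) ≤ ((n:ℝ)+2) * ((n:ℝ)+1) := by positivity
  rw [norm_mul, norm_mul, Real.norm_eq_abs, Real.norm_eq_abs, Real.norm_eq_abs,
    abs_of_pos (c_pos (n+2)), abs_pow]
  have h2 : |((n:ℝ)+2) * ((n:ℝ)+1)| = ((n:ℝ)+2) * ((n:ℝ)+1) := abs_of_nonneg h1
  rw [h2]
  have : ((n:ℝ)+2) * ((n:ℝ)+1) * c (n+2) ≤ ((n:ℝ)+2) * ((n:ℝ)+1) := by
    nlinarith [c_pos (n+2), c_le_one (n+2)]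
  calc ((n:ℝ)+2) * ((n:ℝ)+1) * c (n+2) * |x| ^ n
      ≤ (((n:ℝ)+2) * ((n:ℝ)+1)) * |x| ^ n := mul_le_mul_of_nonneg_right this (by positivity)
    _ = (1 * (n:ℝ)^2 + 3 * (n:ℝ) + 2) * |x| ^ n := by ring

lemma f_zero : f 0 = 1 := by
  unfold f
  rw [tsum_eq_single 0 (fun n hn => by simp [zero_pow hn])]
  simp [c_zero]

/-- termwise derivative of the series defining `f`. -/
lemma f_hasDeriv {x : ℝ} (hx : |x| < 1) : HasDerivAt f (f1 x) x := by
  set r : ℝ := (|x| + 1) / 2 with hr_def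
  have hxr : |x| < r := by rw [hr_def]; linarith
  have hr1 : r < 1 := by rw [hr_def]; linarith
  have hr0 : 0 ≤ r := by positivity
  have hu : Summable (fun n : ℕ => ((n:ℝ)+1) * 1 * r ^ n) := by
    simpa using summable_aux hr0 hr1 0 1 1
  -- u n = n * r^(n-1) bounded series; we use u n := (n+1) * r ^ n ≥ n * r^(n-1) ? no.
  -- instead we use the bound  ‖c n * (n * y^(n-1))‖ ≤ n * r^(n-1) and sum that directly.
  have husum : Summable (fun n : ℕ => (n:ℝ) * r ^ (n-1)) := by
    rw [← summable_nat_add_iff 1]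
    refine hu.congr fun n => ?_
    simp only [Nat.add_sub_cancel, Nat.cast_add, Nat.cast_one]
    ring
  have key := hasDerivAt_tsum_of_isPreconnected husum (Metric.isOpen_ball)
    (convex_ball (0:ℝ) r).isPreconnected
    (g := fun (n : ℕ) (z : ℝ) => c n * z ^ n)
    (g' := fun (n : ℕ) (y : ℝ) => c n * ((n:ℝ) * y ^ (n-1)))
    (u := fun (n : ℕ) => (n:ℝ) * r ^ (n-1)) (y₀ := 0) (y := x)
    ?_ ?_ ?_ ?_ ?_
  · have hs : Summable (fun n : ℕ => c n * ((n:ℝ) * x ^ (n-1))) := by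
      rw [← summable_nat_add_iff 1]
      refine (sum1 hx).congr fun n => ?_
      simp only [Nat.add_sub_cancel, Nat.cast_add, Nat.cast_one]
      ring
    have : (∑' n : ℕ, c n * ((n:ℝ) * x ^ (n-1))) = f1 x := by
      rw [Summable.tsum_eq_zero_add hs]
      simp only [Nat.cast_zero, zero_mul, mul_zero, zero_add]
      unfold f1
      refine tsum_congr fun n => ?_
      push_cast
      ring
    rwa [this] at key
  · intro n y _
    simpa using (hasDerivAt_pow n y).const_mul (c n)
  · intro n y hy
    rw [Metric.mem_ball, dist_zero_right, Real.norm_eq_abs] at hy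
    rw [norm_mul, norm_mul, Real.norm_eq_abs, Real.norm_eq_abs, Real.norm_eq_abs,
      abs_of_pos (c_pos n), Nat.abs_cast, abs_pow]
    have h1 : |y| ^ (n-1) ≤ r ^ (n-1) := pow_le_pow_left₀ (abs_nonneg y) hy.le _
    have h2 : c n * ((n:ℝ) * |y| ^ (n-1)) ≤ 1 * ((n:ℝ) * r ^ (n-1)) := by
      have hle := c_le_one n
      have hp := c_pos n
      have hn0 : (0:ℝ) ≤ (n:ℝ) := Nat.cast_nonneg n
      have hmm : (n:ℝ) * |y| ^ (n-1) ≤ (n:ℝ) * r ^ (n-1) := mul_le_mul_of_nonneg_left h1 hn0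
      have hnn : (0:ℝ) ≤ (n:ℝ) * |y| ^ (n-1) :=
        mul_nonneg hn0 (pow_nonneg (abs_nonneg y) (n-1))
      nlinarith
    simpa using h2
  · rw [Metric.mem_ball, dist_zero_right]
    simpa using lt_of_le_of_lt (abs_nonneg x) hxr
  · refine summable_of_ne_finset_zero (s := {0}) fun n hn => ?_
    simp only [Finset.mem_singleton] at hn
    simp [zero_pow hn]
  · rw [Metric.mem_ball, dist_zero_right, Real.norm_eq_abs]; exact hxr

lemma f1_hasDeriv {x : ℝ} (hx : |x| < 1) : HasDerivAt f1 (f2 x) x := by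
  set r : ℝ := (|x| + 1) / 2 with hr_def
  have hxr : |x| < r := by rw [hr_def]; linarith
  have hr1 : r < 1 := by rw [hr_def]; linarith
  have hr0 : 0 ≤ r := by positivity
  have hu : Summable (fun n : ℕ => (((n:ℝ)+2) * ((n:ℝ)+1)) * r ^ n) := by
    refine (summable_aux hr0 hr1 1 3 2).congr fun n => ?_
    ring
  have husum : Summable (fun n : ℕ => ((n:ℝ)+1) * (n:ℝ) * r ^ (n-1)) := by
    rw [← summable_nat_add_iff 1]
    refine hu.congr fun n => ?_
    simp only [Nat.add_sub_cancel, Nat.cast_add, Nat.cast_one]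
    ring
  have key := hasDerivAt_tsum_of_isPreconnected husum (Metric.isOpen_ball)
    (convex_ball (0:ℝ) r).isPreconnected
    (g := fun (n : ℕ) (z : ℝ) => ((n:ℝ)+1) * c (n+1) * z ^ n)
    (g' := fun (n : ℕ) (y : ℝ) => ((n:ℝ)+1) * c (n+1) * ((n:ℝ) * y ^ (n-1)))
    (u := fun (n : ℕ) => ((n:ℝ)+1) * (n:ℝ) * r ^ (n-1)) (y₀ := 0) (y := x)
    ?_ ?_ ?_ ?_ ?_
  · have hs : Summable (fun n : ℕ => ((n:ℝ)+1) * c (n+1) * ((n:ℝ) * x ^ (n-1))) := by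
      rw [← summable_nat_add_iff 1]
      refine (sum2 hx).congr fun n => ?_
      simp only [Nat.add_sub_cancel, Nat.cast_add, Nat.cast_one]
      ring
    have : (∑' n : ℕ, ((n:ℝ)+1) * c (n+1) * ((n:ℝ) * x ^ (n-1))) = f2 x := by
      rw [Summable.tsum_eq_zero_add hs]
      simp only [Nat.cast_zero, zero_mul, mul_zero, zero_add]
      unfold f2
      refine tsum_congr fun n => ?_
      push_cast
      ring
    rwa [this] at key
  · intro n y _
    simpa using (hasDerivAt_pow n y).const_mul (((n:ℝ)+1) * c (n+1))
  · intro n y hy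
    rw [Metric.mem_ball, dist_zero_right, Real.norm_eq_abs] at hy
    have hcp := c_pos (n+1)
    have hcl := c_le_one (n+1)
    have h1 : |y| ^ (n-1) ≤ r ^ (n-1) := pow_le_pow_left₀ (abs_nonneg y) hy.le _
    have hn1 : (0:ℝ) ≤ (n:ℝ)+1 := by positivity
    have hn0 : (0:ℝ) ≤ (n:ℝ) := Nat.cast_nonneg n
    have hmm : (n:ℝ) * |y| ^ (n-1) ≤ (n:ℝ) * r ^ (n-1) := mul_le_mul_of_nonneg_left h1 hn0
    have hnn : (0:ℝ) ≤ (n:ℝ) * |y| ^ (n-1) :=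
      mul_nonneg hn0 (pow_nonneg (abs_nonneg y) (n-1))
    simp only [norm_mul, norm_pow, Real.norm_eq_abs, Nat.abs_cast, abs_of_nonneg hn1,
      abs_of_pos hcp]
    calc ((n:ℝ)+1) * c (n+1) * ((n:ℝ) * |y| ^ (n-1))
        = ((n:ℝ)+1) * (c (n+1) * ((n:ℝ) * |y| ^ (n-1))) := by ring
      _ ≤ ((n:ℝ)+1) * ((n:ℝ) * r ^ (n-1)) :=
          mul_le_mul_of_nonneg_left ((mul_le_of_le_one_left hnn hcl).trans hmm) hn1
      _ = ((n:ℝ)+1) * (n:ℝ) * r ^ (n-1) := by ring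
  · rw [Metric.mem_ball, dist_zero_right]
    simpa using lt_of_le_of_lt (abs_nonneg x) hxr
  · refine summable_of_ne_finset_zero (s := {0}) fun n hn => ?_
    simp only [Finset.mem_singleton] at hn
    simp [zero_pow hn]
  · rw [Metric.mem_ball, dist_zero_right, Real.norm_eq_abs]; exact hxr

/-- The hypergeometric ODE. -/
lemma ode {x : ℝ} (hx : |x| < 1) :
    x*(1-x) * f2 x + (1/2 - 2*x) * f1 x - 5/36 * f x = 0 := by
  have S0 : HasSum (fun n : ℕ => c n * x ^ n) (f x) := (sum0 hx).hasSum
  have S1 : HasSum (fun n : ℕ => ((n:ℝ)+1) * c (n+1) * x ^ n) (f1 x) := (sum1 hx).hasSum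
  have S2 : HasSum (fun n : ℕ => ((n:ℝ)+2) * ((n:ℝ)+1) * c (n+2) * x ^ n) (f2 x) :=
    (sum2 hx).hasSum
  -- A : x * f2 x = Σ (n+1) n c_{n+1} x^n
  have hA : HasSum (fun n : ℕ => ((n:ℝ)+1) * (n:ℝ) * c (n+1) * x ^ n) (x * f2 x) := by
    refine (hasSum_nat_add_iff' 1).mp ?_
    have h := S2.mul_left x
    have he : (fun n : ℕ => x * (((n:ℝ)+2) * ((n:ℝ)+1) * c (n+2) * x ^ n)) =
        fun n : ℕ => (((n+1:ℕ):ℝ)+1) * ((n+1:ℕ):ℝ) * c ((n+1)+1) * x ^ (n+1) := by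
      funext n
      push_cast
      ring
    rw [he] at h
    simpa using h
  -- B : x * f1 x = Σ n c_n x^n
  have hB : HasSum (fun n : ℕ => (n:ℝ) * c n * x ^ n) (x * f1 x) := by
    refine (hasSum_nat_add_iff' 1).mp ?_
    have h := S1.mul_left x
    have he : (fun n : ℕ => x * (((n:ℝ)+1) * c (n+1) * x ^ n)) =
        fun n : ℕ => ((n+1:ℕ):ℝ) * c (n+1) * x ^ (n+1) := by
      funext n
      push_cast
      ring
    rw [he] at h
    simpa using h
  -- C : x * (x * f2 x) = Σ n (n-1) c_n x^n
  have hC : HasSum (fun n : ℕ => (n:ℝ) * ((n:ℝ)-1) * c n * x ^ n) (x * (x * f2 x)) := by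
    refine (hasSum_nat_add_iff' 1).mp ?_
    have h := hA.mul_left x
    have he : (fun n : ℕ => x * (((n:ℝ)+1) * (n:ℝ) * c (n+1) * x ^ n)) =
        fun n : ℕ => ((n+1:ℕ):ℝ) * (((n+1:ℕ):ℝ)-1) * c (n+1) * x ^ (n+1) := by
      funext n
      push_cast
      ring
    rw [he] at h
    simpa using h
  have hT : HasSum
      (fun n : ℕ => (((n:ℝ)+1) * (n:ℝ) * c (n+1) * x ^ n - (n:ℝ) * ((n:ℝ)-1) * c n * x ^ n)
        + ((1/2) * (((n:ℝ)+1) * c (n+1) * x ^ n) - 2 * ((n:ℝ) * c n * x ^ n))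
        - (5/36) * (c n * x ^ n))
      ((x * f2 x - x * (x * f2 x)) + ((1/2) * f1 x - 2 * (x * f1 x)) - (5/36) * f x) :=
    (((hA.sub hC).add ((S1.mul_left (1/2)).sub (hB.mul_left 2))).sub (S0.mul_left (5/36)))
  have hz : (fun n : ℕ => (((n:ℝ)+1) * (n:ℝ) * c (n+1) * x ^ n - (n:ℝ) * ((n:ℝ)-1) * c n * x ^ n)
        + ((1/2) * (((n:ℝ)+1) * c (n+1) * x ^ n) - 2 * ((n:ℝ) * c n * x ^ n))
        - (5/36) * (c n * x ^ n)) = fun _ : ℕ => (0:ℝ) := by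
    funext n
    linear_combination (x ^ n) * c_rec n
  rw [hz] at hT
  have h0 : ((x * f2 x - x * (x * f2 x)) + ((1/2) * f1 x - 2 * (x * f1 x)) - (5/36) * f x)
      = 0 := hT.unique hasSum_zero
  linarith [h0, sq_nonneg x]

noncomputable def g (t : ℝ) : ℝ := Real.cos t * f (Real.sin t ^ 2)
noncomputable def g1 (t : ℝ) : ℝ :=
  -Real.sin t * f (Real.sin t ^ 2) + 2 * Real.sin t * Real.cos t ^ 2 * f1 (Real.sin t ^ 2)

lemma sin_sq_lt {ψ : ℝ} (h : ψ ∈ Set.Ioo (-(π/2)) (π/2)) : |Real.sin ψ ^ 2| < 1 := by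
  have hc : 0 < Real.cos ψ := Real.cos_pos_of_mem_Ioo h
  have hp := Real.sin_sq_add_cos_sq ψ
  rw [abs_of_nonneg (sq_nonneg _)]
  nlinarith

lemma sin_sq_deriv (ψ : ℝ) :
    HasDerivAt (fun t => Real.sin t ^ 2) (2 * Real.sin ψ * Real.cos ψ) ψ := by
  have := (Real.hasDerivAt_sin ψ).pow 2
  refine this.congr_deriv (Eq.symm ?_)
  push_cast
  ring

lemma compf {ψ : ℝ} (h : ψ ∈ Set.Ioo (-(π/2)) (π/2)) :
    HasDerivAt (fun t => f (Real.sin t ^ 2))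
      (f1 (Real.sin ψ ^ 2) * (2 * Real.sin ψ * Real.cos ψ)) ψ :=
  by have := (f_hasDeriv (sin_sq_lt h)).comp ψ (sin_sq_deriv ψ); exact this

lemma compf1 {ψ : ℝ} (h : ψ ∈ Set.Ioo (-(π/2)) (π/2)) :
    HasDerivAt (fun t => f1 (Real.sin t ^ 2))
      (f2 (Real.sin ψ ^ 2) * (2 * Real.sin ψ * Real.cos ψ)) ψ :=
  by have := (f1_hasDeriv (sin_sq_lt h)).comp ψ (sin_sq_deriv ψ); exact this

lemma g_deriv {ψ : ℝ} (h : ψ ∈ Set.Ioo (-(π/2)) (π/2)) : HasDerivAt g (g1 ψ) ψ := by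
  have hd := (Real.hasDerivAt_cos ψ).mul (compf h)
  refine hd.congr_deriv (Eq.symm ?_)
  unfold g1
  ring

lemma g1_deriv {ψ : ℝ} (h : ψ ∈ Set.Ioo (-(π/2)) (π/2)) :
    HasDerivAt g1 (-(4/9) * g ψ) ψ := by
  have hx := sin_sq_lt h
  have part1 := ((Real.hasDerivAt_sin ψ).neg).mul (compf h)
  have hu := ((Real.hasDerivAt_sin ψ).const_mul (2:ℝ)).mul ((Real.hasDerivAt_cos ψ).pow 2)
  have part2 := hu.mul (compf1 h)
  have hsum := part1.add part2
  have hode := ode hx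
  have hpyth := Real.sin_sq_add_cos_sq ψ
  have hfun : g1 = fun t =>
      -Real.sin t * f (Real.sin t ^ 2) + 2 * Real.sin t * Real.cos t ^ 2 * f1 (Real.sin t ^ 2) := by
    funext t; rfl
  rw [hfun]
  refine hsum.congr_deriv (Eq.symm ?_)
  unfold g
  simp only [Pi.neg_apply, Pi.pow_apply, Pi.mul_apply]
  push_cast
  linear_combination (-4*Real.cos ψ) * hode +
    (-(2*Real.cos ψ * f1 (Real.sin ψ ^ 2) + 4*Real.sin ψ ^ 2 * Real.cos ψ * f2 (Real.sin ψ ^ 2)))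
      * hpyth

noncomputable def EE (t : ℝ) : ℝ := g t - Real.cos (2 * t / 3)
noncomputable def EE1 (t : ℝ) : ℝ := g1 t + 2/3 * Real.sin (2 * t / 3)
noncomputable def W (t : ℝ) : ℝ := EE1 t ^ 2 + 4/9 * EE t ^ 2

lemma lin_deriv (t : ℝ) : HasDerivAt (fun u : ℝ => 2 * u / 3) (2/3) t := by
  simpa using ((hasDerivAt_id t).const_mul (2:ℝ)).div_const 3

lemma EE_deriv {t : ℝ} (h : t ∈ Set.Ioo (-(π/2)) (π/2)) : HasDerivAt EE (EE1 t) t := by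
  have h2 : HasDerivAt (fun u => Real.cos (2 * u / 3)) (-Real.sin (2 * t / 3) * (2/3)) t :=
    by have := (Real.hasDerivAt_cos (2 * t / 3)).comp t (lin_deriv t); exact this
  have := (g_deriv h).sub h2
  refine this.congr_deriv (Eq.symm ?_)
  unfold EE1
  ring

lemma EE1_deriv {t : ℝ} (h : t ∈ Set.Ioo (-(π/2)) (π/2)) :
    HasDerivAt EE1 (-(4/9) * EE t) t := by
  have h2 : HasDerivAt (fun u => Real.sin (2 * u / 3)) (Real.cos (2 * t / 3) * (2/3)) t :=
    by have := (Real.hasDerivAt_sin (2 * t / 3)).comp t (lin_deriv t); exact this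
  have := (g1_deriv h).add (h2.const_mul (2/3 : ℝ))
  refine this.congr_deriv (Eq.symm ?_)
  unfold EE
  ring

lemma W_deriv {t : ℝ} (h : t ∈ Set.Ioo (-(π/2)) (π/2)) : HasDerivAt W 0 t := by
  have := ((EE1_deriv h).pow 2).add (((EE_deriv h).pow 2).const_mul (4/9 : ℝ))
  refine this.congr_deriv (Eq.symm ?_)
  push_cast
  ring

lemma g_eq {ψ₀ : ℝ} (h0 : 0 ≤ ψ₀) (h1 : ψ₀ < π/2) : g ψ₀ = Real.cos (2 * ψ₀ / 3) := by
  have hπ : (0:ℝ) < π := Real.pi_pos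
  have hsub : Set.Icc (0:ℝ) ψ₀ ⊆ Set.Ioo (-(π/2)) (π/2) := by
    intro t ht
    exact ⟨by nlinarith [ht.1], lt_of_le_of_lt ht.2 h1⟩
  have hconst := constant_of_has_deriv_right_zero (f := W) (a := 0) (b := ψ₀)
    (fun t ht => ((W_deriv (hsub ht)).continuousAt).continuousWithinAt)
    (fun t ht => (W_deriv (hsub (Set.mem_Icc_of_Ico ht))).hasDerivWithinAt)
  have hW0 : W 0 = 0 := by
    simp [W, EE, EE1, g, g1, f_zero]
  have hWψ := hconst ψ₀ (Set.right_mem_Icc.mpr h0)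
  rw [hW0] at hWψ
  unfold W at hWψ
  have hE0 : EE ψ₀ = 0 := by nlinarith [sq_nonneg (EE1 ψ₀), sq_nonneg (EE ψ₀)]
  unfold EE at hE0
  linarith

lemma hyp_eq_f (x : ℝ) : hyp (1/6) (5/6) (1/2) x = f x := rfl

lemma hyp_eval {ψ : ℝ} (h0 : 0 ≤ ψ) (h1 : ψ < π/2) :
    hyp (1/6) (5/6) (1/2) (Real.sin ψ ^ 2) = Real.cos (2 * ψ / 3) / Real.cos ψ := by
  have hπ : (0:ℝ) < π := Real.pi_pos
  have hc : 0 < Real.cos ψ := Real.cos_pos_of_mem_Ioo ⟨by nlinarith, h1⟩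
  have hg := g_eq h0 h1
  unfold g at hg
  rw [hyp_eq_f, eq_div_iff hc.ne', mul_comm]
  exact hg

end KProof

theorem K_integral_formula (α : ℝ) (hα : α ∈ Set.Ioo (0:ℝ) (π/2)) (κ : ℝ) (hκ : κ = Real.sin α) :
    (∫ φ in (0:ℝ)..(π/2), hyp (1/6) (5/6) (1/2) (κ^2 * Real.sin φ ^ 2)) =
      Real.sqrt 2 * ∫ ψ in (0:ℝ)..α,
        Real.cos (2 * ψ / 3) / Real.sqrt (Real.cos (2 * ψ) - Real.cos (2 * α)) := by
  obtain ⟨hα0, hα2⟩ := hα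
  have hπ : (0:ℝ) < π := Real.pi_pos
  have hκ0 : 0 < κ := by rw [hκ]; exact Real.sin_pos_of_pos_of_lt_pi hα0 (by linarith)
  have hκ1 : κ < 1 := by
    have hca : 0 < Real.cos α := Real.cos_pos_of_mem_Ioo ⟨by nlinarith, hα2⟩
    have hp := Real.sin_sq_add_cos_sq α
    rw [hκ]
    nlinarith [Real.sin_le_one α]
  set sub : ℝ → ℝ := fun φ => Real.arcsin (κ * Real.sin φ) with hsub_def
  set sub' : ℝ → ℝ := fun φ => κ * Real.cos φ / Real.sqrt (1 - (κ * Real.sin φ)^2)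
    with hsub'_def
  have hbound : ∀ φ : ℝ, |κ * Real.sin φ| ≤ κ := by
    intro φ
    rw [abs_mul, abs_of_pos hκ0]
    exact mul_le_of_le_one_right hκ0.le (abs_le.mpr ⟨Real.neg_one_le_sin φ, Real.sin_le_one φ⟩)
  have hmem : ∀ φ : ℝ, -1 ≤ κ * Real.sin φ ∧ κ * Real.sin φ ≤ 1 := by
    intro φ
    have h := abs_le.mp ((hbound φ).trans hκ1.le)
    exact ⟨h.1, h.2⟩
  have hne1 : ∀ φ : ℝ, κ * Real.sin φ ≠ 1 := by
    intro φ h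
    have := (abs_le.mp (hbound φ)).2
    rw [h] at this
    linarith
  have hne1' : ∀ φ : ℝ, κ * Real.sin φ ≠ -1 := by
    intro φ h
    have := (abs_le.mp (hbound φ)).1
    rw [h] at this
    linarith
  have hderiv : ∀ φ ∈ Set.Ioo (0:ℝ) (π/2),
      HasDerivWithinAt sub (sub' φ) (Set.Ioo (0:ℝ) (π/2)) φ := by
    intro φ _
    have harc := Real.hasDerivAt_arcsin (hne1' φ) (hne1 φ)
    have hin := (Real.hasDerivAt_sin φ).const_mul κ
    have hcomp := harc.comp φ hin
    refine HasDerivAt.hasDerivWithinAt ?_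
    refine hcomp.congr_deriv (Eq.symm ?_)
    rw [hsub'_def]
    ring
  have hmono : StrictMonoOn sub (Set.Icc 0 (π/2)) := by
    intro a ha b hb hab
    have hsa : Real.sin a < Real.sin b :=
      Real.strictMonoOn_sin ⟨by linarith [ha.1], by linarith [ha.2]⟩
        ⟨by linarith [hb.1], by linarith [hb.2]⟩ hab
    have h1 : κ * Real.sin a < κ * Real.sin b := by nlinarith
    exact Real.strictMonoOn_arcsin ⟨(hmem a).1, (hmem a).2⟩ ⟨(hmem b).1, (hmem b).2⟩ h1
  have hinj : Set.InjOn sub (Set.Ioo (0:ℝ) (π/2)) :=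
    (hmono.mono Set.Ioo_subset_Icc_self).injOn
  have hsub0 : sub 0 = 0 := by simp [hsub_def]
  have hsubπ : sub (π/2) = α := by
    rw [hsub_def]
    simp only [Real.sin_pi_div_two, mul_one]
    rw [hκ, Real.arcsin_sin (by linarith) (by linarith)]
  have hcont : ContinuousOn sub (Set.Icc 0 (π/2)) :=
    (Real.continuous_arcsin.comp (continuous_const.mul Real.continuous_sin)).continuousOn
  have himg : sub '' Set.Ioo (0:ℝ) (π/2) = Set.Ioo 0 α := by
    apply Set.Subset.antisymm
    · rintro y ⟨φ, hφ, rfl⟩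
      constructor
      · rw [← hsub0]
        exact hmono (Set.left_mem_Icc.mpr (by linarith)) (Set.Ioo_subset_Icc_self hφ) hφ.1
      · rw [← hsubπ]
        exact hmono (Set.Ioo_subset_Icc_self hφ) (Set.right_mem_Icc.mpr (by linarith)) hφ.2
    · have h := intermediate_value_Ioo (by linarith : (0:ℝ) ≤ π/2) hcont
      rw [hsub0, hsubπ] at h
      exact h
  have hcv := integral_image_eq_integral_abs_deriv_smul measurableSet_Ioo hderiv hinj
    (fun ψ => Real.cos (2 * ψ / 3) / Real.sqrt (Real.cos (2 * ψ) - Real.cos (2 * α)))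
  rw [himg] at hcv
  simp only [smul_eq_mul] at hcv
  have hpt : ∀ φ ∈ Set.Ioo (0:ℝ) (π/2), hyp (1/6) (5/6) (1/2) (κ^2 * Real.sin φ ^ 2)
      = Real.sqrt 2 * (|sub' φ| *
        (Real.cos (2 * sub φ / 3) / Real.sqrt (Real.cos (2 * sub φ) - Real.cos (2 * α)))) := by
    intro φ hφ
    have hsφ : 0 < Real.sin φ := Real.sin_pos_of_pos_of_lt_pi hφ.1 (by linarith [hφ.2])
    have hcφ : 0 < Real.cos φ := Real.cos_pos_of_mem_Ioo ⟨by linarith [hφ.1], hφ.2⟩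
    have hx1 : κ * Real.sin φ < 1 := lt_of_le_of_lt (le_of_abs_le (hbound φ)) hκ1
    have hsψ : Real.sin (sub φ) = κ * Real.sin φ :=
      Real.sin_arcsin (hmem φ).1 (hmem φ).2
    have hcψ : Real.cos (sub φ) = Real.sqrt (1 - (κ * Real.sin φ)^2) := Real.cos_arcsin _
    have hD : 0 < 1 - (κ * Real.sin φ)^2 := by
      have h := abs_le.mp (hbound φ)
      nlinarith
    have hcψ0 : 0 < Real.cos (sub φ) := by rw [hcψ]; exact Real.sqrt_pos.mpr hD
    have hψ0 : 0 ≤ sub φ := Real.arcsin_nonneg.mpr (by positivity)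
    have hψ2 : sub φ < π/2 := Real.arcsin_lt_pi_div_two.mpr hx1
    have heval := KProof.hyp_eval hψ0 hψ2
    have hxx : κ^2 * Real.sin φ ^ 2 = Real.sin (sub φ) ^ 2 := by rw [hsψ]; ring
    rw [hxx, heval]
    have h1' : (κ * Real.sin φ)^2 + Real.cos (sub φ)^2 = 1 := by
      rw [← hsψ]; exact Real.sin_sq_add_cos_sq (sub φ)
    have h2' : κ^2 + Real.cos α^2 = 1 := by
      rw [hκ]; exact Real.sin_sq_add_cos_sq α
    have h3 := Real.sin_sq_add_cos_sq φ
    have hdiff : Real.cos (2 * sub φ) - Real.cos (2 * α) = 2 * (κ * Real.cos φ)^2 := by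
      rw [Real.cos_two_mul, Real.cos_two_mul]
      linear_combination 2*h1' - 2*h2' - 2*κ^2*h3
    have hsq : Real.sqrt (Real.cos (2 * sub φ) - Real.cos (2 * α))
        = Real.sqrt 2 * (κ * Real.cos φ) := by
      rw [hdiff, Real.sqrt_mul (by norm_num : (0:ℝ) ≤ 2), Real.sqrt_sq (by positivity)]
    have habs : |sub' φ| = κ * Real.cos φ / Real.sqrt (1 - (κ * Real.sin φ)^2) := by
      rw [hsub'_def]
      exact abs_of_nonneg (by positivity)
    rw [habs, hsq, ← hcψ]
    have hs2 : (0:ℝ) < Real.sqrt 2 := by positivity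
    have hkc : (0:ℝ) < κ * Real.cos φ := by positivity
    field_simp
  have hle1 : (0:ℝ) ≤ π/2 := by linarith
  have hle2 : (0:ℝ) ≤ α := hα0.le
  rw [intervalIntegral.integral_of_le hle1, intervalIntegral.integral_of_le hle2,
    MeasureTheory.integral_Ioc_eq_integral_Ioo, MeasureTheory.integral_Ioc_eq_integral_Ioo,
    MeasureTheory.setIntegral_congr_fun measurableSet_Ioo hpt,
    MeasureTheory.integral_const_mul, ← hcv]
end

section
/- Let 0 < α < π/2 and κ = sin α. Then √2 ∫₀^{α} cos(2ψ/3)/√(cos 2ψ − cos 2α) dψ = √(3/2) · ∫_{cos(2(π+α)/3)}^{cos(2(π−α)/3)} dx / √(4x³ − 3x − (1 − 2κ²)). -/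
set_option maxHeartbeats 1000000
open Real MeasureTheory Set

lemma aux_low (α : ℝ) (hα0 : 0 < α) (hα2 : α < π/2) (ψ : ℝ) (hψ : ψ ∈ Set.Ioo 0 α) :
    (4 * (Real.sin α * Real.cos α) / π) * (α - ψ) ≤ Real.cos (2*ψ) - Real.cos (2*α) := by
  obtain ⟨h0, h1⟩ := hψ
  have hπ := Real.pi_pos
  have hsc : Real.cos (2*ψ) - Real.cos (2*α)
      = 2 * Real.sin (ψ + α) * Real.sin (α - ψ) := by
    rw [Real.cos_sub_cos]
    rw [show (2*ψ + 2*α)/2 = ψ + α by ring, show (2*ψ - 2*α)/2 = -(α - ψ) by ring,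
      Real.sin_neg]
    ring
  have hsinsum : Real.sin α * Real.cos α ≤ Real.sin (ψ + α) := by
    rw [Real.sin_add]
    have h2 : Real.cos α ≤ Real.cos ψ :=
      Real.cos_le_cos_of_nonneg_of_le_pi h0.le (by linarith) h1.le
    have h3 : 0 ≤ Real.sin ψ := Real.sin_nonneg_of_nonneg_of_le_pi h0.le (by linarith)
    have h4 : 0 ≤ Real.cos α := Real.cos_nonneg_of_mem_Icc ⟨by linarith, by linarith⟩
    have h5 : 0 ≤ Real.sin α := Real.sin_nonneg_of_nonneg_of_le_pi (by linarith) (by linarith)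
    nlinarith
  have hsindiff : 2/π * (α - ψ) ≤ Real.sin (α - ψ) :=
    Real.mul_le_sin (by linarith) (by linarith)
  have hs0 : 0 < Real.sin α * Real.cos α := by
    have := Real.sin_pos_of_pos_of_lt_pi hα0 (by linarith)
    have := Real.cos_pos_of_mem_Ioo (show α ∈ Set.Ioo (-(π/2)) (π/2) from ⟨by linarith, hα2⟩)
    positivity
  have hd0 : 0 ≤ α - ψ := by linarith
  rw [hsc]
  have := mul_le_mul hsinsum hsindiff (by positivity) (by nlinarith [Real.sin_le_one (ψ+α), Real.neg_one_le_sin (ψ+α)])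
  calc 4 * (Real.sin α * Real.cos α) / π * (α - ψ)
      = 2 * ((Real.sin α * Real.cos α) * (2/π * (α - ψ))) := by ring
    _ ≤ 2 * (Real.sin (ψ + α) * Real.sin (α - ψ)) := by nlinarith
    _ = 2 * Real.sin (ψ + α) * Real.sin (α - ψ) := by ring

lemma aux_int (α : ℝ) (hα0 : 0 < α) (c : ℝ)
    (f : ℝ → ℝ) (hm : AEStronglyMeasurable f (volume.restrict (Set.Ioo 0 α)))
    (hb : ∀ ψ ∈ Set.Ioo 0 α, ‖f ψ‖ ≤ c / Real.sqrt (α - ψ)) :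
    MeasureTheory.IntegrableOn f (Set.Ioo 0 α) := by
  have hri : IntervalIntegrable (fun x : ℝ => x ^ (-(1/2) : ℝ)) volume 0 α :=
    intervalIntegral.intervalIntegrable_rpow' (by norm_num)
  have hri2 : IntervalIntegrable (fun x : ℝ => c * (α - x) ^ (-(1/2) : ℝ)) volume 0 α := by
    simpa using ((hri.comp_sub_left α).const_mul c).symm
  have hIoc : MeasureTheory.IntegrableOn (fun x : ℝ => c * (α - x) ^ (-(1/2) : ℝ)) (Set.Ioc 0 α) :=
    (intervalIntegrable_iff_integrableOn_Ioc_of_le hα0.le).mp hri2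
  have hIoo := hIoc.mono_set Set.Ioo_subset_Ioc_self
  refine hIoo.integrable.mono hm ?_
  filter_upwards [ae_restrict_mem measurableSet_Ioo] with ψ hψ
  have hd : 0 < α - ψ := by linarith [hψ.2]
  have : c / Real.sqrt (α - ψ) = c * (α - ψ) ^ (-(1/2) : ℝ) := by
    rw [Real.rpow_neg hd.le, Real.sqrt_eq_rpow]
    ring
  calc ‖f ψ‖ ≤ c / Real.sqrt (α - ψ) := hb ψ hψ
    _ = c * (α - ψ) ^ (-(1/2) : ℝ) := this
    _ ≤ ‖c * (α - ψ) ^ (-(1/2) : ℝ)‖ := le_abs_self _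

theorem integral_transform (α : ℝ) (hα : α ∈ Set.Ioo (0:ℝ) (π/2)) (κ : ℝ) (hκ : κ = Real.sin α) :
    Real.sqrt 2 * (∫ ψ in (0:ℝ)..α,
        Real.cos (2 * ψ / 3) / Real.sqrt (Real.cos (2 * ψ) - Real.cos (2 * α))) =
      Real.sqrt (3/2) * ∫ x in (Real.cos (2 * (π + α) / 3))..(Real.cos (2 * (π - α) / 3)),
        1 / Real.sqrt (4 * x ^ 3 - 3 * x - (1 - 2 * κ^2)) := by
  obtain ⟨hα0, hα2⟩ := hα
  have hπ := Real.pi_pos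
  have hA : (1 - 2 * κ^2 : ℝ) = Real.cos (2 * α) := by
    rw [hκ, Real.cos_two_mul', Real.cos_sq']; ring
  rw [hA]
  -- notation
  set g : ℝ → ℝ := fun x => 1 / Real.sqrt (4 * x ^ 3 - 3 * x - Real.cos (2 * α)) with hgdef
  set F : ℝ → ℝ := fun ψ => Real.cos (2 * (π - ψ) / 3) with hFdef
  set F' : ℝ → ℝ := fun ψ => Real.sin (2 * (π - ψ) / 3) * (2/3) with hF'def
  have hc12 : Real.cos (2 * (π + α) / 3) < Real.cos (2 * (π - α) / 3) :=
    Real.cos_lt_cos_of_nonneg_of_le_pi (by linarith) (by linarith) (by linarith)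
  -- derivative of F
  have hder : ∀ ψ ∈ Set.Ioo (-α) α, HasDerivWithinAt F (F' ψ) (Set.Ioo (-α) α) ψ := by
    intro ψ _
    have h1 : HasDerivAt (fun ψ : ℝ => 2 * (π - ψ) / 3) (-2/3) ψ := by
      simpa using (((hasDerivAt_id ψ).const_sub π).const_mul 2).div_const 3
    have h2 := (Real.hasDerivAt_cos (2 * (π - ψ) / 3)).comp ψ h1
    have h3 : HasDerivAt F (F' ψ) ψ := by
      rw [show F' ψ = -Real.sin (2 * (π - ψ) / 3) * (-2 / 3) by rw [hF'def]; ring]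
      exact h2
    exact h3.hasDerivWithinAt
  -- injectivity of F on Ioo (-α) α
  have hinj : Set.InjOn F (Set.Ioo (-α) α) := by
    intro x hx y hy hxy
    have h1 : 2 * (π - x) / 3 ∈ Set.Icc 0 π := ⟨by nlinarith [hx.2], by nlinarith [hx.1]⟩
    have h2 : 2 * (π - y) / 3 ∈ Set.Icc 0 π := ⟨by nlinarith [hy.2], by nlinarith [hy.1]⟩
    have := Real.injOn_cos h1 h2 hxy
    linarith
  -- image of F
  have himg : F '' Set.Ioo (-α) α
      = Set.Ioo (Real.cos (2 * (π + α) / 3)) (Real.cos (2 * (π - α) / 3)) := by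
    apply Set.Subset.antisymm
    · rintro _ ⟨ψ, hψ, rfl⟩
      constructor
      · rw [hFdef]
        exact Real.cos_lt_cos_of_nonneg_of_le_pi (by nlinarith [hψ.2]) (by linarith)
          (by nlinarith [hψ.1])
      · rw [hFdef]
        exact Real.cos_lt_cos_of_nonneg_of_le_pi (by nlinarith) (by nlinarith [hψ.1])
          (by nlinarith [hψ.2])
    · have hcont : ContinuousOn F (Set.Icc (-α) α) := by
        apply Continuous.continuousOn
        rw [hFdef]; fun_prop
      have h := intermediate_value_Ioo (by linarith : (-α : ℝ) ≤ α) hcont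
      have hFa : F (-α) = Real.cos (2 * (π + α) / 3) := by
        rw [hFdef]; norm_num [show 2 * (π - -α) / 3 = 2 * (π + α) / 3 by ring]
      have hFb : F α = Real.cos (2 * (π - α) / 3) := by rw [hFdef]
      rw [hFa, hFb] at h
      exact h
  -- triplication identity
  have hcube : ∀ θ : ℝ, 4 * Real.cos (2*θ/3)^3 - 3*Real.cos (2*θ/3) = Real.cos (2*θ) := by
    intro θ
    have := Real.cos_three_mul (2*θ/3)
    rw [show 3*(2*θ/3) = 2*θ by ring] at this
    linarith
  have hgF : ∀ ψ : ℝ, g (F ψ) = 1 / Real.sqrt (Real.cos (2*ψ) - Real.cos (2*α)) := by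
    intro ψ
    have h := hcube (π - ψ)
    rw [show Real.cos (2*(π-ψ)) = Real.cos (2*ψ) from by
      rw [show 2*(π-ψ) = 2*π - 2*ψ by ring, Real.cos_two_pi_sub]] at h
    rw [hgdef, hFdef]
    simp only
    rw [show 4 * Real.cos (2*(π-ψ)/3)^3 - 3*Real.cos (2*(π-ψ)/3) - Real.cos (2*α)
      = Real.cos (2*ψ) - Real.cos (2*α) from by linarith]
  have hFneg : ∀ ψ : ℝ, F (-ψ) = Real.cos (2*(π+ψ)/3) := by
    intro ψ; rw [hFdef]; norm_num [show 2*(π - -ψ)/3 = 2*(π+ψ)/3 by ring]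
  have hF'neg : ∀ ψ : ℝ, F' (-ψ) = Real.sin (2*(π+ψ)/3) * (2/3) := by
    intro ψ; rw [hF'def]; norm_num [show 2*(π - -ψ)/3 = 2*(π+ψ)/3 by ring]
  have hgFneg : ∀ ψ : ℝ, g (F (-ψ)) = 1 / Real.sqrt (Real.cos (2*ψ) - Real.cos (2*α)) := by
    intro ψ
    have h := hcube (π + ψ)
    rw [show Real.cos (2*(π+ψ)) = Real.cos (2*ψ) from by
      rw [show 2*(π+ψ) = 2*ψ + 2*π by ring, Real.cos_add_two_pi]] at h
    rw [hFneg ψ, hgdef]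
    simp only
    rw [show 4 * Real.cos (2*(π+ψ)/3)^3 - 3*Real.cos (2*(π+ψ)/3) - Real.cos (2*α)
      = Real.cos (2*ψ) - Real.cos (2*α) from by linarith]
  -- positivity of sines
  have hsm : ∀ ψ ∈ Set.Ioo (0:ℝ) α, 0 < Real.sin (2*(π-ψ)/3) := fun ψ hψ =>
    Real.sin_pos_of_pos_of_lt_pi (by nlinarith [hψ.2]) (by nlinarith [hψ.1])
  have hsp : ∀ ψ ∈ Set.Ioo (0:ℝ) α, 0 < Real.sin (2*(π+ψ)/3) := fun ψ hψ =>
    Real.sin_pos_of_pos_of_lt_pi (by nlinarith [hψ.1]) (by nlinarith [hψ.2])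
  -- the constant for the lower bound
  set C1 : ℝ := 4*(Real.sin α * Real.cos α)/π with hC1def
  have hC1 : 0 < C1 := by
    have h1 := Real.sin_pos_of_pos_of_lt_pi hα0 (by linarith)
    have h2 := Real.cos_pos_of_mem_Ioo (show α ∈ Set.Ioo (-(π/2)) (π/2) from ⟨by linarith, hα2⟩)
    rw [hC1def]; positivity
  have hone : ∀ ψ ∈ Set.Ioo (0:ℝ) α,
      1 / Real.sqrt (Real.cos (2*ψ) - Real.cos (2*α))
        ≤ (1 / Real.sqrt C1) / Real.sqrt (α - ψ) := by
    intro ψ hψ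
    have hd : 0 < α - ψ := by linarith [hψ.2]
    have h0 : 0 < Real.sqrt C1 * Real.sqrt (α - ψ) := by positivity
    have hsqb : Real.sqrt C1 * Real.sqrt (α - ψ)
        ≤ Real.sqrt (Real.cos (2*ψ) - Real.cos (2*α)) := by
      rw [← Real.sqrt_mul hC1.le]
      exact Real.sqrt_le_sqrt (by simpa [hC1def] using aux_low α hα0 hα2 ψ hψ)
    calc 1 / Real.sqrt (Real.cos (2*ψ) - Real.cos (2*α))
        ≤ 1 / (Real.sqrt C1 * Real.sqrt (α - ψ)) := one_div_le_one_div_of_le h0 hsqb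
      _ = (1 / Real.sqrt C1) / Real.sqrt (α - ψ) := by rw [div_div]
  -- integrability of both integrands on Ioo 0 α
  have hI₂ : MeasureTheory.IntegrableOn (fun ψ => |F' ψ| • g (F ψ)) (Set.Ioo 0 α) := by
    apply aux_int α hα0 ((2/3) / Real.sqrt C1)
    · apply Measurable.aestronglyMeasurable
      rw [hF'def, hFdef, hgdef]
      fun_prop
    · intro ψ hψ
      rw [smul_eq_mul, hgF ψ]
      have h1 : (0:ℝ) ≤ 1 / Real.sqrt (Real.cos (2*ψ) - Real.cos (2*α)) := by positivity
      rw [Real.norm_eq_abs, abs_mul, abs_abs, abs_of_nonneg h1]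
      have h2 : |F' ψ| ≤ 2/3 := by
        rw [hF'def]
        simp only
        rw [abs_mul]
        calc |Real.sin (2*(π-ψ)/3)| * |(2/3 : ℝ)|
            ≤ 1 * |(2/3 : ℝ)| := by
              have := Real.abs_sin_le_one (2*(π-ψ)/3)
              gcongr
          _ = 2/3 := by norm_num
      calc |F' ψ| * (1 / Real.sqrt (Real.cos (2*ψ) - Real.cos (2*α)))
          ≤ (2/3) * ((1 / Real.sqrt C1) / Real.sqrt (α - ψ)) := by
            apply mul_le_mul h2 (hone ψ hψ) h1 (by norm_num)
        _ = ((2/3) / Real.sqrt C1) / Real.sqrt (α - ψ) := by ring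
  have hI₁ : MeasureTheory.IntegrableOn (fun ψ => |F' (-ψ)| • g (F (-ψ))) (Set.Ioo 0 α) := by
    apply aux_int α hα0 ((2/3) / Real.sqrt C1)
    · apply Measurable.aestronglyMeasurable
      rw [hF'def, hFdef, hgdef]
      fun_prop
    · intro ψ hψ
      rw [smul_eq_mul, hgFneg ψ]
      have h1 : (0:ℝ) ≤ 1 / Real.sqrt (Real.cos (2*ψ) - Real.cos (2*α)) := by positivity
      rw [Real.norm_eq_abs, abs_mul, abs_abs, abs_of_nonneg h1]
      have h2 : |F' (-ψ)| ≤ 2/3 := by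
        rw [hF'neg ψ, abs_mul]
        calc |Real.sin (2*(π+ψ)/3)| * |(2/3 : ℝ)|
            ≤ 1 * |(2/3 : ℝ)| := by
              have := Real.abs_sin_le_one (2*(π+ψ)/3)
              gcongr
          _ = 2/3 := by norm_num
      calc |F' (-ψ)| * (1 / Real.sqrt (Real.cos (2*ψ) - Real.cos (2*α)))
          ≤ (2/3) * ((1 / Real.sqrt C1) / Real.sqrt (α - ψ)) := by
            apply mul_le_mul h2 (hone ψ hψ) h1 (by norm_num)
        _ = ((2/3) / Real.sqrt C1) / Real.sqrt (α - ψ) := by ring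
  -- the negation substitution
  have himgneg : (Neg.neg : ℝ → ℝ) '' Set.Ioo 0 α = Set.Ioo (-α) 0 := by
    rw [Set.image_neg_Ioo]; norm_num
  have hderneg : ∀ x ∈ Set.Ioo (0:ℝ) α,
      HasDerivWithinAt (Neg.neg : ℝ → ℝ) ((fun _ : ℝ => (-1:ℝ)) x) (Set.Ioo 0 α) x :=
    fun x _ => (hasDerivAt_neg x).hasDerivWithinAt
  have hinjneg : Set.InjOn (Neg.neg : ℝ → ℝ) (Set.Ioo 0 α) := fun a _ b _ h => neg_injective h
  have hInegIoo : MeasureTheory.IntegrableOn (fun ψ => |F' ψ| • g (F ψ)) (Set.Ioo (-α) 0) := by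
    rw [← himgneg,
      integrableOn_image_iff_integrableOn_abs_deriv_smul measurableSet_Ioo hderneg hinjneg]
    simpa using hI₁
  have hnegint : ∫ ψ in Set.Ioo (-α) 0, |F' ψ| • g (F ψ)
      = ∫ ψ in Set.Ioo 0 α, |F' (-ψ)| • g (F (-ψ)) := by
    rw [← himgneg,
      integral_image_eq_integral_abs_deriv_smul measurableSet_Ioo hderneg hinjneg]
    simp
  -- sine sum identity
  have hsum : ∀ ψ : ℝ, Real.sin (2*(π-ψ)/3) + Real.sin (2*(π+ψ)/3)
      = Real.sqrt 3 * Real.cos (2*ψ/3) := by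
    intro ψ
    rw [show 2*(π-ψ)/3 = 2*π/3 - 2*ψ/3 by ring, show 2*(π+ψ)/3 = 2*π/3 + 2*ψ/3 by ring,
      Real.sin_sub, Real.sin_add,
      show Real.sin (2*π/3) = Real.sqrt 3 / 2 by
        rw [show 2*π/3 = π - π/3 by ring, Real.sin_pi_sub, Real.sin_pi_div_three]]
    ring
  -- the main computation
  have main : ∫ x in Set.Ioo (Real.cos (2 * (π + α) / 3)) (Real.cos (2 * (π - α) / 3)), g x
      = (2 * Real.sqrt 3 / 3) * ∫ ψ in Set.Ioo (0:ℝ) α,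
          Real.cos (2 * ψ / 3) / Real.sqrt (Real.cos (2 * ψ) - Real.cos (2 * α)) := by
    rw [← himg, integral_image_eq_integral_abs_deriv_smul measurableSet_Ioo hder hinj g]
    rw [← MeasureTheory.integral_Ioc_eq_integral_Ioo,
      ← Set.Ioc_union_Ioc_eq_Ioc (by linarith : -α ≤ (0:ℝ)) hα0.le,
      MeasureTheory.setIntegral_union (Set.Ioc_disjoint_Ioc_of_le le_rfl) measurableSet_Ioc
        (Iff.mpr integrableOn_Ioc_iff_integrableOn_Ioo hInegIoo)
        (Iff.mpr integrableOn_Ioc_iff_integrableOn_Ioo hI₂),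
      MeasureTheory.integral_Ioc_eq_integral_Ioo, MeasureTheory.integral_Ioc_eq_integral_Ioo,
      hnegint, ← MeasureTheory.integral_add hI₁ hI₂]
    have heq : Set.EqOn (fun ψ => |F' (-ψ)| • g (F (-ψ)) + |F' ψ| • g (F ψ))
        (fun ψ => (2 * Real.sqrt 3 / 3) *
          (Real.cos (2 * ψ / 3) / Real.sqrt (Real.cos (2 * ψ) - Real.cos (2 * α))))
        (Set.Ioo 0 α) := by
      intro ψ hψ
      simp only
      rw [hF'neg ψ, hgFneg ψ, hgF ψ, hF'def]
      simp only
      rw [abs_of_pos (by have := hsp ψ hψ; positivity),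
        abs_of_pos (by have := hsm ψ hψ; positivity), smul_eq_mul, smul_eq_mul]
      have hsum' := hsum ψ
      calc Real.sin (2*(π+ψ)/3) * (2/3) * (1 / Real.sqrt (Real.cos (2*ψ) - Real.cos (2*α)))
            + Real.sin (2*(π-ψ)/3) * (2/3) * (1 / Real.sqrt (Real.cos (2*ψ) - Real.cos (2*α)))
          = (Real.sin (2*(π-ψ)/3) + Real.sin (2*(π+ψ)/3)) * (2/3)
              * (1 / Real.sqrt (Real.cos (2*ψ) - Real.cos (2*α))) := by ring
        _ = (Real.sqrt 3 * Real.cos (2*ψ/3)) * (2/3)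
              * (1 / Real.sqrt (Real.cos (2*ψ) - Real.cos (2*α))) := by rw [hsum']
        _ = (2 * Real.sqrt 3 / 3) *
              (Real.cos (2 * ψ / 3) / Real.sqrt (Real.cos (2 * ψ) - Real.cos (2 * α))) := by ring
    rw [MeasureTheory.setIntegral_congr_fun measurableSet_Ioo heq,
      MeasureTheory.integral_const_mul]
  -- finish
  have hconst : Real.sqrt (3/2) * (2 * Real.sqrt 3 / 3) = Real.sqrt 2 := by
    have h3 : Real.sqrt (3/2) * Real.sqrt 3 = Real.sqrt (9/2) := by
      rw [← Real.sqrt_mul (by norm_num : (0:ℝ) ≤ 3/2)]; norm_num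
    have h92 : Real.sqrt (9/2 : ℝ) = 3 * Real.sqrt 2 / 2 := by
      rw [show (9/2:ℝ) = (3*Real.sqrt 2/2)^2 by
        nlinarith [Real.sq_sqrt (show (0:ℝ) ≤ 2 by norm_num)], Real.sqrt_sq (by positivity)]
    rw [h92] at h3
    linarith [h3]
  rw [intervalIntegral.integral_of_le hα0.le, intervalIntegral.integral_of_le hc12.le,
    MeasureTheory.integral_Ioc_eq_integral_Ioo, MeasureTheory.integral_Ioc_eq_integral_Ioo,
    main, ← mul_assoc, hconst]
end

section
/- Let 0 < β < π/3 and x = 2 sin β / (sin β + √3 cos β). Then (3/4)·x²/(1 − x + x²) = sin² β and 3·(1 − x)/(1 − x + x²) = 3 − 4 sin² β; consequently (27/4)·x²(1−x)²/(1 − x + x²)³ = sin² 3β. -/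
open Real

theorem x_parametrization (β : ℝ) (hβ : β ∈ Set.Ioo (0:ℝ) (π/3))
    (x : ℝ) (hx : x = 2 * Real.sin β / (Real.sin β + Real.sqrt 3 * Real.cos β)) :
    (3/4) * x ^ 2 / (1 - x + x ^ 2) = Real.sin β ^ 2 ∧
      3 * (1 - x) / (1 - x + x ^ 2) = 3 - 4 * Real.sin β ^ 2 ∧
      (27/4) * x ^ 2 * (1 - x) ^ 2 / (1 - x + x ^ 2) ^ 3 = Real.sin (3 * β) ^ 2 := by
  obtain ⟨hβ0, hβ1⟩ := hβ
  have hpi := Real.pi_pos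
  have hs : 0 < Real.sin β := Real.sin_pos_of_pos_of_lt_pi hβ0 (by linarith)
  have hc : 0 < Real.cos β := Real.cos_pos_of_mem_Ioo ⟨by linarith, by linarith⟩
  have h3 : Real.sqrt 3 ^ 2 = 3 := Real.sq_sqrt (by norm_num)
  have hsq3 : 0 < Real.sqrt 3 := Real.sqrt_pos.mpr (by norm_num)
  have hd : 0 < Real.sin β + Real.sqrt 3 * Real.cos β := by positivity
  have hpy : Real.sin β ^ 2 + Real.cos β ^ 2 = 1 := Real.sin_sq_add_cos_sq β
  have hxd : x * (Real.sin β + Real.sqrt 3 * Real.cos β) = 2 * Real.sin β := by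
    rw [hx]; field_simp
  have hden : 1 - x + x ^ 2 = 3 / (Real.sin β + Real.sqrt 3 * Real.cos β) ^ 2 := by
    rw [eq_div_iff (by positivity)]
    linear_combination (x * (Real.sin β + Real.sqrt 3 * Real.cos β) + 2 * Real.sin β
        - (Real.sin β + Real.sqrt 3 * Real.cos β)) * hxd
      + Real.cos β ^ 2 * h3 + 3 * hpy
  have hdpos : 0 < 1 - x + x ^ 2 := by rw [hden]; positivity
  have h1 : (3/4) * x ^ 2 / (1 - x + x ^ 2) = Real.sin β ^ 2 := by
    rw [hden, hx]; field_simp; ring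
  have h2 : 3 * (1 - x) / (1 - x + x ^ 2) = 3 - 4 * Real.sin β ^ 2 := by
    rw [hden, hx]; field_simp
    linear_combination Real.cos β ^ 2 * h3 + 3 * hpy
  refine ⟨h1, h2, ?_⟩
  have hsplit : (27/4) * x ^ 2 * (1 - x) ^ 2 / (1 - x + x ^ 2) ^ 3 =
      ((3/4) * x ^ 2 / (1 - x + x ^ 2)) * (3 * (1 - x) / (1 - x + x ^ 2)) ^ 2 := by
    field_simp; ring
  rw [hsplit, h1, h2, Real.sin_three_mul]; ring
end

section
/- The map x ↦ ξ from (0,1) to (0,1) determined by 4ξ(1 − ξ) = (27/4)·x²(1 − x)²/(1 − x + x²)³ together with the parametrizations ξ = sin²α (α ∈ (0, π/2)), x = 2 sin β/(sin β + √3 cos β) (β ∈ (0, π/3)), 2α = 3β, is a strictly increasing bijection; moreover this bijection is invariant under the simultaneous replacements x ↦ 1 − x, ξ ↦ 1 − ξ. -/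
open Real

noncomputable def gg (x : ℝ) : ℝ :=
  Real.sin ((3/2) * Real.arctan (Real.sqrt 3 * x / (2 - x))) ^ 2

lemma arctan_sqrt3 : Real.arctan (Real.sqrt 3) = π/3 := by
  have h := Real.pi_pos
  rw [← Real.tan_pi_div_three, Real.arctan_tan (by linarith) (by linarith)]

lemma theta_mem {x : ℝ} (hx : x ∈ Set.Icc (0:ℝ) 1) :
    (3/2) * Real.arctan (Real.sqrt 3 * x / (2 - x)) ∈ Set.Icc 0 (π/2) := by
  obtain ⟨h0, h1⟩ := hx
  have h2 : (0:ℝ) < 2 - x := by linarith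
  have hs3 : (0:ℝ) ≤ Real.sqrt 3 := Real.sqrt_nonneg 3
  have hu0 : 0 ≤ Real.sqrt 3 * x / (2 - x) := by positivity
  have hu1 : Real.sqrt 3 * x / (2 - x) ≤ Real.sqrt 3 := by
    rw [div_le_iff₀ h2]; nlinarith
  constructor
  · have := Real.arctan_strictMono.monotone hu0
    rw [Real.arctan_zero] at this; linarith
  · have := Real.arctan_strictMono.monotone hu1
    rw [arctan_sqrt3] at this; linarith

lemma gg_mono : StrictMonoOn gg (Set.Icc (0:ℝ) 1) := by
  intro a ha b hb hab
  have h2a : (0:ℝ) < 2 - a := by linarith [ha.2]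
  have h2b : (0:ℝ) < 2 - b := by linarith [hb.2]
  have hs3 : (0:ℝ) < Real.sqrt 3 := by positivity
  have hu : Real.sqrt 3 * a / (2 - a) < Real.sqrt 3 * b / (2 - b) := by
    rw [div_lt_div_iff₀ h2a h2b]; nlinarith
  have ht : Real.arctan (Real.sqrt 3 * a / (2 - a)) < Real.arctan (Real.sqrt 3 * b / (2 - b)) :=
    Real.arctan_strictMono hu
  have hθa := theta_mem ha
  have hθb := theta_mem hb
  have hπ := Real.pi_pos
  have hsin : Real.sin ((3/2) * Real.arctan (Real.sqrt 3 * a / (2 - a))) <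
      Real.sin ((3/2) * Real.arctan (Real.sqrt 3 * b / (2 - b))) := by
    apply Real.strictMonoOn_sin
    · exact ⟨by linarith [hθa.1], by linarith [hθa.2]⟩
    · exact ⟨by linarith [hθb.1], by linarith [hθb.2]⟩
    · linarith
  have hna : 0 ≤ Real.sin ((3/2) * Real.arctan (Real.sqrt 3 * a / (2 - a))) :=
    Real.sin_nonneg_of_nonneg_of_le_pi hθa.1 (by linarith [hθa.2])
  exact pow_lt_pow_left₀ hsin hna (by norm_num)

lemma gg_zero : gg 0 = 0 := by
  simp [gg]

lemma gg_one : gg 1 = 1 := by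
  have : Real.sqrt 3 * 1 / (2 - 1) = Real.sqrt 3 := by norm_num
  rw [gg, this, arctan_sqrt3]
  rw [show (3/2) * (π/3) = π/2 by ring, Real.sin_pi_div_two]
  norm_num

lemma gg_cont : ContinuousOn gg (Set.Icc (0:ℝ) 1) := by
  unfold gg
  apply ContinuousOn.pow
  apply Real.continuous_sin.comp_continuousOn
  apply ContinuousOn.mul continuousOn_const
  apply Real.continuous_arctan.comp_continuousOn
  apply ContinuousOn.div (by fun_prop) (by fun_prop)
  intro x hx
  have := hx.2
  intro h; simp only [Set.mem_Icc] at hx; linarith [hx.2, sub_eq_zero.mp h]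

lemma sin3arctan_sq (u : ℝ) :
    Real.sin (3 * Real.arctan u) ^ 2 = u^2 * (3 - u^2)^2 / (1 + u^2)^3 := by
  have h1 : (0:ℝ) < 1 + u^2 := by positivity
  have hs : Real.sqrt (1 + u^2) ^ 2 = 1 + u^2 := Real.sq_sqrt h1.le
  have hs0 : Real.sqrt (1 + u^2) ≠ 0 := by positivity
  rw [Real.sin_three_mul, Real.sin_arctan]
  have key : 3 * (u / Real.sqrt (1 + u^2)) - 4 * (u / Real.sqrt (1 + u^2))^3
      = u * (3 - u^2) / Real.sqrt (1 + u^2) ^ 3 := by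
    field_simp
    linear_combination 3 * u * hs
  rw [key, div_pow, show (Real.sqrt (1 + u^2) ^ 3)^2 = (Real.sqrt (1 + u^2) ^ 2)^3 by ring, hs]
  ring

lemma gg_eq (x : ℝ) :
    4 * gg x * (1 - gg x) =
      Real.sin (3 * Real.arctan (Real.sqrt 3 * x / (2 - x))) ^ 2 := by
  set t := Real.arctan (Real.sqrt 3 * x / (2 - x)) with ht
  have hpy := Real.sin_sq_add_cos_sq ((3/2) * t)
  have h2θ : Real.sin (3 * t) = 2 * Real.sin ((3/2) * t) * Real.cos ((3/2) * t) := by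
    rw [show (3:ℝ) * t = 2 * ((3/2) * t) by ring, Real.sin_two_mul]
  rw [h2θ]
  show 4 * Real.sin ((3/2) * t) ^ 2 * (1 - Real.sin ((3/2) * t) ^ 2) = _
  nlinarith [hpy]

theorem modular_bijection :
    ∃ g : ℝ → ℝ,
      StrictMonoOn g (Set.Ioo (0:ℝ) 1) ∧
      Set.BijOn g (Set.Ioo (0:ℝ) 1) (Set.Ioo (0:ℝ) 1) ∧
      (∀ x ∈ Set.Ioo (0:ℝ) 1,
        4 * g x * (1 - g x) = (27/4) * x ^ 2 * (1 - x) ^ 2 / (1 - x + x ^ 2) ^ 3) ∧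
      (∀ β ∈ Set.Ioo (0:ℝ) (π/3),
        g (2 * Real.sin β / (Real.sin β + Real.sqrt 3 * Real.cos β)) =
          Real.sin (3 * β / 2) ^ 2) ∧
      (∀ x ∈ Set.Ioo (0:ℝ) 1, g (1 - x) = 1 - g x) := by
  have hπ := Real.pi_pos
  have hs3 : (Real.sqrt 3)^2 = 3 := Real.sq_sqrt (by norm_num)
  have hs3pos : (0:ℝ) < Real.sqrt 3 := by positivity
  refine ⟨gg, gg_mono.mono Set.Ioo_subset_Icc_self, ?_, ?_, ?_, ?_⟩
  · -- BijOn
    have hmaps : Set.MapsTo gg (Set.Ioo (0:ℝ) 1) (Set.Ioo (0:ℝ) 1) := by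
      intro x hx
      obtain ⟨hx0, hx1⟩ := hx
      have h1 := gg_mono (Set.left_mem_Icc.mpr (by norm_num))
        ⟨hx0.le, hx1.le⟩ hx0
      have h2 := gg_mono ⟨hx0.le, hx1.le⟩ (Set.right_mem_Icc.mpr (by norm_num)) hx1
      rw [gg_zero] at h1; rw [gg_one] at h2
      exact ⟨h1, h2⟩
    refine ⟨hmaps, (gg_mono.mono Set.Ioo_subset_Icc_self).injOn, ?_⟩
    intro y hy
    have := intermediate_value_Ioo (by norm_num : (0:ℝ) ≤ 1) gg_cont
    rw [gg_zero, gg_one] at this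
    exact this hy
  · -- algebraic identity
    intro x hx
    obtain ⟨hx0, hx1⟩ := hx
    have h2 : (0:ℝ) < 2 - x := by linarith
    have hd : (0:ℝ) < 1 - x + x^2 := by nlinarith
    rw [gg_eq, sin3arctan_sq]
    have hu2 : (Real.sqrt 3 * x / (2 - x))^2 = 3 * x^2 / (2 - x)^2 := by
      rw [div_pow, mul_pow, hs3]
    rw [hu2]
    field_simp
    ring
  · -- parametrization
    intro β hβ
    obtain ⟨hβ0, hβ1⟩ := hβ
    have hβπ2 : β < π/2 := by linarith
    have hsβ : 0 < Real.sin β := Real.sin_pos_of_pos_of_lt_pi hβ0 (by linarith)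
    have hcβ : 0 < Real.cos β := Real.cos_pos_of_mem_Ioo ⟨by linarith, hβπ2⟩
    have hdpos : 0 < Real.sin β + Real.sqrt 3 * Real.cos β := by positivity
    have hd0 : Real.sin β + Real.sqrt 3 * Real.cos β ≠ 0 := ne_of_gt hdpos
    set x := 2 * Real.sin β / (Real.sin β + Real.sqrt 3 * Real.cos β) with hxdef
    have h2x : 2 - x = 2 * Real.sqrt 3 * Real.cos β / (Real.sin β + Real.sqrt 3 * Real.cos β) := by
      rw [hxdef]; field_simp; ring
    have harg : Real.sqrt 3 * x / (2 - x) = Real.tan β := by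
      rw [Real.tan_eq_sin_div_cos, h2x, hxdef]
      field_simp
    have hat : Real.arctan (Real.sqrt 3 * x / (2 - x)) = β := by
      rw [harg, Real.arctan_tan (by linarith) hβπ2]
    rw [gg, hat, show (3/2) * β = 3 * β / 2 by ring]
  · -- symmetry
    intro x hx
    obtain ⟨hx0, hx1⟩ := hx
    have h2 : (0:ℝ) < 2 - x := by linarith
    set u := Real.sqrt 3 * x / (2 - x) with hudef
    have hu0 : 0 < u := by rw [hudef]; positivity
    have hu1 : u < Real.sqrt 3 := by
      rw [hudef, div_lt_iff₀ h2]; nlinarith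
    set t := Real.arctan u with htdef
    have ht0 : 0 < t := by
      rw [htdef, ← Real.arctan_zero]; exact Real.arctan_strictMono hu0
    have htlt : t < π/3 := by
      rw [htdef, ← arctan_sqrt3]; exact Real.arctan_strictMono hu1
    have h1u : (0:ℝ) < 1 + u^2 := by positivity
    have hs : Real.sqrt (1 + u^2) ^ 2 = 1 + u^2 := Real.sq_sqrt h1u.le
    have hs0 : (0:ℝ) < Real.sqrt (1 + u^2) := by positivity
    have hsin : Real.sin t = u / Real.sqrt (1 + u^2) := Real.sin_arctan u
    have hcos : Real.cos t = 1 / Real.sqrt (1 + u^2) := Real.cos_arctan u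
    have huq : u * (2 - x) = Real.sqrt 3 * x := by
      rw [hudef]; field_simp
    have harg : Real.sqrt 3 * (1 - x) / (2 - (1 - x)) = Real.tan (π/3 - t) := by
      rw [Real.tan_eq_sin_div_cos, Real.sin_sub, Real.cos_sub,
        Real.sin_pi_div_three, Real.cos_pi_div_three, hsin, hcos]
      have h1x : (0:ℝ) < 2 - (1 - x) := by linarith
      have hden : (0:ℝ) < 1 / 2 * (1 / Real.sqrt (1 + u^2)) +
          Real.sqrt 3 / 2 * (u / Real.sqrt (1 + u^2)) := by positivity
      rw [div_eq_div_iff h1x.ne' hden.ne']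
      field_simp
      linear_combination 2 * huq + u * (1-x) * hs3
    have hat : Real.arctan (Real.sqrt 3 * (1 - x) / (2 - (1 - x))) = π/3 - t := by
      rw [harg, Real.arctan_tan (by linarith) (by linarith)]
    have hpy := Real.sin_sq_add_cos_sq ((3/2) * t)
    rw [gg, gg, hat, show (3/2) * (π/3 - t) = π/2 - (3/2) * t by ring,
      Real.sin_pi_div_two_sub]
    linarith [hpy]
end
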